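/- Kelvin–Noether circulation theorem with thermodynamic source, and the generalized Charney–Drazin corollary. Let γ₀ : [0,1] → ℝⁿ be a smooth loop with γ₀(0) = γ₀(1), and let v, as well as scalar functions h, T, s on ℝⁿ × ℝ, be smooth and satisfy the motion equation ∂ₜv + (u·∇)v + v_j∇u^j = ∇h + T∇s everywhere. Then the circulation I(t) := ∫₀¹ v(φ(t, γ₀(s)), t) · ∂ₛ[φ(t, γ₀(s))] ds satisfies I′(t) = ∫₀¹ (T∇s)(φ(t, γ₀(s)), t) · ∂ₛ[φ(t, γ₀(s))] ds for all t; in particular, if T∇s vanishes identically (the barotropic/isentropic case) then I(t) is constant in t. -/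

import Mathlib

open scoped BigOperators

noncomputable section

section KNhelpers
open MeasureTheory intervalIntegral Metric

variable {E F : Type*} [NormedAddCommGroup E] [NormedSpace ℝ E]
  [NormedAddCommGroup F] [NormedSpace ℝ F]

lemma KN.hasDerivAt_fst {f : ℝ × ℝ → F} {a b : ℝ} (hf : DifferentiableAt ℝ f (a, b)) :
    HasDerivAt (fun τ => f (τ, b)) (fderiv ℝ f (a, b) (1, 0)) a :=
  hf.hasFDerivAt.comp_hasDerivAt a ((hasDerivAt_id a).prodMk (hasDerivAt_const a b))

lemma KN.hasDerivAt_snd {f : ℝ × ℝ → F} {a b : ℝ} (hf : DifferentiableAt ℝ f (a, b)) :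
    HasDerivAt (fun s => f (a, s)) (fderiv ℝ f (a, b) (0, 1)) b :=
  hf.hasFDerivAt.comp_hasDerivAt b ((hasDerivAt_const b a).prodMk (hasDerivAt_id b))

lemma KN.fderiv_partial_fst {g : E × ℝ → F} {x : E} {t : ℝ} (hg : DifferentiableAt ℝ g (x, t)) (w : E) :
    fderiv ℝ (fun y => g (y, t)) x w = fderiv ℝ g (x, t) (w, 0) := by
  have h1 : HasFDerivAt (fun y : E => (y, t)) (ContinuousLinearMap.inl ℝ E ℝ) x :=
    hasFDerivAt_prodMk_left x t
  have h2 : HasFDerivAt (fun y => g (y, t))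
      ((fderiv ℝ g (x, t)).comp (ContinuousLinearMap.inl ℝ E ℝ)) x := hg.hasFDerivAt.comp x h1
  rw [h2.fderiv]
  rfl

lemma KN.hasDerivAt_partial_snd {g : E × ℝ → F} {x : E} {t : ℝ} (hg : DifferentiableAt ℝ g (x, t)) :
    HasDerivAt (fun τ => g (x, τ)) (fderiv ℝ g (x, t) (0, 1)) t :=
  hg.hasFDerivAt.comp_hasDerivAt t ((hasDerivAt_const t x).prodMk (hasDerivAt_id t))

lemma KN.fderiv_pair_split {g : E × ℝ → F} {x : E} {t : ℝ} (hg : DifferentiableAt ℝ g (x, t)) (w : E) (c : ℝ) :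
    fderiv ℝ g (x, t) (w, c) =
      fderiv ℝ (fun y => g (y, t)) x w + c • deriv (fun τ => g (x, τ)) t := by
  rw [KN.fderiv_partial_fst hg w, (KN.hasDerivAt_partial_snd hg).deriv]
  have h2 : (w, c) = (w, (0:ℝ)) + c • ((0:E), (1:ℝ)) := by simp [Prod.ext_iff]
  rw [h2, map_add, (fderiv ℝ g (x, t)).map_smul]

lemma KN.fderiv_pi_eq_sum {n : ℕ} {f : (Fin n → ℝ) → F} {x : Fin n → ℝ} (w : Fin n → ℝ) :
    fderiv ℝ f x w = ∑ j, w j • fderiv ℝ f x (Pi.single j 1) := by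
  have hw : w = ∑ j, w j • (Pi.single j 1 : Fin n → ℝ) := by
    funext k
    simp [Finset.sum_apply, Pi.single_apply]
  conv_lhs => rw [hw]
  rw [map_sum]
  simp

lemma KN.hasDerivAt_comp_proj {n : ℕ} {f : ℝ → (Fin n → ℝ)} {d : Fin n → ℝ} {s : ℝ} (i : Fin n)
    (hf : HasDerivAt f d s) : HasDerivAt (fun r => f r i) (d i) s :=
  (ContinuousLinearMap.proj (R := ℝ) (φ := fun _ : Fin n => ℝ) i).hasFDerivAt.comp_hasDerivAt s hf

lemma KN.hasDerivAt_integral {G : ℝ × ℝ → ℝ} (hG : ContDiff ℝ (⊤ : ℕ∞) G) (t : ℝ) :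
    HasDerivAt (fun τ => ∫ s in (0:ℝ)..1, G (τ, s))
      (∫ s in (0:ℝ)..1, fderiv ℝ G (t, s) (1, 0)) t := by
  have hGc : Continuous G := hG.continuous
  have hG' : Continuous fun p : ℝ × ℝ => fderiv ℝ G p (1, 0) :=
    (hG.continuous_fderiv (by simp)).clm_apply continuous_const
  obtain ⟨C, hC⟩ : ∃ C, ∀ p ∈ (Set.Icc (t-1) (t+1) ×ˢ Set.uIcc (0:ℝ) 1),
      ‖fderiv ℝ G p (1, 0)‖ ≤ C :=
    (isCompact_Icc.prod isCompact_uIcc).exists_bound_of_continuousOn hG'.continuousOn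
  have key := intervalIntegral.hasDerivAt_integral_of_dominated_loc_of_deriv_le
    (F := fun τ s => G (τ, s)) (F' := fun τ s => fderiv ℝ G (τ, s) (1, 0))
    (x₀ := t) (a := 0) (b := 1) (μ := volume) (bound := fun _ => C)
    (s := Metric.ball t 1) (Metric.ball_mem_nhds t one_pos)
    (Filter.Eventually.of_forall fun x =>
      (hGc.comp (continuous_const.prodMk continuous_id)).aestronglyMeasurable)
    ((hGc.comp (continuous_const.prodMk continuous_id)).intervalIntegrable 0 1)
    ((hG'.comp (continuous_const.prodMk continuous_id)).aestronglyMeasurable)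
    ?_ intervalIntegrable_const ?_
  · exact key.2
  · refine Filter.Eventually.of_forall fun s hs x hx => hC (x, s) ⟨?_, ?_⟩
    · have h2 : |x - t| < 1 := by
        simpa [Real.norm_eq_abs] using mem_ball_iff_norm.1 hx
      constructor <;> [linarith [(abs_lt.1 h2).1]; linarith [(abs_lt.1 h2).2]]
    · exact Set.uIoc_subset_uIcc hs
  · refine Filter.Eventually.of_forall fun s _ x _ => ?_
    have : DifferentiableAt ℝ G (x, s) := hG.differentiable (by simp) _
    exact this.hasFDerivAt.comp_hasDerivAt x ((hasDerivAt_id x).prodMk (hasDerivAt_const x s))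

end KNhelpers

/-- The Euler–Poincaré transport operator
`[∂ₜv + (u·∇)v + v_j ∇u^j]ᵢ` evaluated at `(x,t)`. -/
def EPop {n : ℕ} (u v : (Fin n → ℝ) → ℝ → (Fin n → ℝ))
    (x : Fin n → ℝ) (t : ℝ) : Fin n → ℝ :=
  fun i =>
    deriv (fun s => v x s i) t
      + fderiv ℝ (fun y => v y t i) x (u x t)
      + ∑ j, v x t j * fderiv ℝ (fun y => u y t j) x (Pi.single i 1)

/-- Spatial gradient of a time-dependent scalar field. -/
def grad {n : ℕ} (f : (Fin n → ℝ) → ℝ → ℝ) (x : Fin n → ℝ) (t : ℝ) : Fin n → ℝ :=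
  fun i => fderiv ℝ (fun y => f y t) x (Pi.single i 1)

/-- **Kelvin–Noether circulation theorem with thermodynamic source, and the
generalized Charney–Drazin corollary.**  If `∂ₜv + (u·∇)v + v_j∇u^j = ∇h + T∇s`,
then the circulation `I(t)` around a material loop satisfies
`I′(t) = ∮ T∇s · dx`; in particular if `T∇s ≡ 0` then `I` is constant. -/
theorem kelvin_noether_with_source
    {n : ℕ}
    (u v : (Fin n → ℝ) → ℝ → (Fin n → ℝ))
    (h T ent : (Fin n → ℝ) → ℝ → ℝ)
    (φ : ℝ → (Fin n → ℝ) → (Fin n → ℝ))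
    (γ₀ : ℝ → (Fin n → ℝ))
    -- smoothness
    (hu : ContDiff ℝ (⊤ : ℕ∞) (fun p : (Fin n → ℝ) × ℝ => u p.1 p.2))
    (hv : ContDiff ℝ (⊤ : ℕ∞) (fun p : (Fin n → ℝ) × ℝ => v p.1 p.2))
    (hh : ContDiff ℝ (⊤ : ℕ∞) (fun p : (Fin n → ℝ) × ℝ => h p.1 p.2))
    (hT : ContDiff ℝ (⊤ : ℕ∞) (fun p : (Fin n → ℝ) × ℝ => T p.1 p.2))
    (hent : ContDiff ℝ (⊤ : ℕ∞) (fun p : (Fin n → ℝ) × ℝ => ent p.1 p.2))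
    (hφ : ContDiff ℝ (⊤ : ℕ∞) (fun p : ℝ × (Fin n → ℝ) => φ p.1 p.2))
    (hγ : ContDiff ℝ (⊤ : ℕ∞) γ₀)
    -- γ₀ is a loop
    (hloop : γ₀ 0 = γ₀ 1)
    -- φ is the flow map of u
    (hflow : ∀ t x₀ i, deriv (fun s => φ s x₀ i) t = u (φ t x₀) t i)
    (hinit : ∀ x₀, φ 0 x₀ = x₀)
    -- motion equation : ∂ₜv + (u·∇)v + v_j∇u^j = ∇h + T∇s
    (hmotion : ∀ x t i,
      EPop u v x t i = grad h x t i + T x t * grad ent x t i) :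
    -- conclusion : I′(t) = ∮ (T∇s)·dx, and if T∇s ≡ 0 then I is constant
    (∀ t,
      HasDerivAt
        (fun τ => ∫ s in (0:ℝ)..1,
          ∑ i, v (φ τ (γ₀ s)) τ i * deriv (fun r => φ τ (γ₀ r) i) s)
        (∫ s in (0:ℝ)..1,
          ∑ i, T (φ t (γ₀ s)) t * grad ent (φ t (γ₀ s)) t i
            * deriv (fun r => φ t (γ₀ r) i) s)
        t)
    ∧ ((∀ x t i, T x t * grad ent x t i = 0) →
        ∀ t₁ t₂,
          (∫ s in (0:ℝ)..1,
            ∑ i, v (φ t₁ (γ₀ s)) t₁ i * deriv (fun r => φ t₁ (γ₀ r) i) s)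
          = ∫ s in (0:ℝ)..1,
            ∑ i, v (φ t₂ (γ₀ s)) t₂ i * deriv (fun r => φ t₂ (γ₀ r) i) s) := by
  classical
  have hTop : ((⊤ : ℕ∞) : WithTop ℕ∞) ≠ 0 := by simp
  -- joint flow map
  set Φ : ℝ × ℝ → (Fin n → ℝ) := fun p => φ p.1 (γ₀ p.2) with hΦdef
  have hΦ : ContDiff ℝ (⊤ : ℕ∞) Φ := hφ.comp (contDiff_fst.prodMk (hγ.comp contDiff_snd))
  have hΦdiff : ∀ p, DifferentiableAt ℝ Φ p := fun p => hΦ.differentiable hTop p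
  -- spatial tangent vector W
  set W : ℝ × ℝ → (Fin n → ℝ) := fun p => fderiv ℝ Φ p (0, 1) with hWdef
  have hWs : ContDiff ℝ (⊤ : ℕ∞) W :=
    (hΦ.fderiv_right (m := (⊤ : ℕ∞)) (by exact_mod_cast le_top)).clm_apply contDiff_const
  have hWderiv : ∀ τ s, HasDerivAt (fun r => Φ (τ, r)) (W (τ, s)) s :=
    fun τ s => KN.hasDerivAt_snd (hΦdiff (τ, s))
  have hWcomp : ∀ τ s i, deriv (fun r => φ τ (γ₀ r) i) s = W (τ, s) i :=
    fun τ s i => (KN.hasDerivAt_comp_proj i (hWderiv τ s)).deriv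
  -- time derivative of Φ is u∘Φ
  have hU : ∀ τ s, HasDerivAt (fun σ => Φ (σ, s)) (u (Φ (τ, s)) τ) τ := by
    intro τ s
    have h1 : HasDerivAt (fun σ => Φ (σ, s)) (fderiv ℝ Φ (τ, s) (1, 0)) τ :=
      KN.hasDerivAt_fst (hΦdiff _)
    have h2 : fderiv ℝ Φ (τ, s) (1, 0) = u (Φ (τ, s)) τ := by
      funext i
      have h3 := (KN.hasDerivAt_comp_proj i h1).deriv
      rw [← h3]
      exact hflow τ (γ₀ s) i
    rwa [h2] at h1
  -- the integrand
  set F : ℝ × ℝ → ℝ := fun p => ∑ i, v (Φ p) p.1 i * W p i with hFdef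
  have hA : ContDiff ℝ (⊤ : ℕ∞) (fun p : ℝ × ℝ => v (Φ p) p.1) :=
    hv.comp (hΦ.prodMk contDiff_fst)
  have hF : ContDiff ℝ (⊤ : ℕ∞) F :=
    ContDiff.sum fun i _ => (contDiff_pi.1 hA i).mul (contDiff_pi.1 hWs i)
  have hIeq : ∀ τ, (∫ s in (0:ℝ)..1,
        ∑ i, v (φ τ (γ₀ s)) τ i * deriv (fun r => φ τ (γ₀ r) i) s)
      = ∫ s in (0:ℝ)..1, F (τ, s) := by
    intro τ
    refine intervalIntegral.integral_congr fun s _ => ?_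
    exact Finset.sum_congr rfl fun i _ => by rw [hWcomp τ s i]
  -- the key pointwise identity for the time-derivative of the integrand
  have hΦi : ∀ i : Fin n, ContDiff ℝ (⊤ : ℕ∞) (fun p => Φ p i) := fun i => contDiff_pi.1 hΦ i
  have hWi : ∀ (i : Fin n) (p : ℝ × ℝ), W p i = fderiv ℝ (fun q => Φ q i) p (0, 1) := by
    rintro i ⟨a, b⟩
    have h1 : HasDerivAt (fun r => Φ (a, r) i) (W (a, b) i) b :=
      KN.hasDerivAt_comp_proj i (hWderiv a b)
    have h2 : HasDerivAt (fun r => Φ (a, r) i)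
        (fderiv ℝ (fun q => Φ q i) (a, b) (0, 1)) b :=
      KN.hasDerivAt_snd ((hΦi i).differentiable hTop _)
    exact h1.unique h2
  have hUi : ∀ (i : Fin n) (p : ℝ × ℝ),
      fderiv ℝ (fun q => Φ q i) p (1, 0) = u (Φ p) p.1 i := by
    rintro i ⟨τ, s'⟩
    have h1 : HasDerivAt (fun σ => Φ (σ, s') i)
        (fderiv ℝ (fun q => Φ q i) (τ, s') (1, 0)) τ :=
      KN.hasDerivAt_fst ((hΦi i).differentiable hTop _)
    have h2 : HasDerivAt (fun σ => Φ (σ, s') i) (u (Φ (τ, s')) τ i) τ :=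
      KN.hasDerivAt_comp_proj i (hU τ s')
    exact h1.unique h2
  have hkey : ∀ t s, fderiv ℝ F (t, s) (1, 0)
      = deriv (fun r => h (Φ (t, r)) t) s
        + ∑ i, T (Φ (t, s)) t * grad ent (Φ (t, s)) t i * W (t, s) i := by
    intro t s
    set x := Φ (t, s) with hx
    set Wv := W (t, s) with hWv
    -- derivative of the v-factor
    have hA_i : ∀ i : Fin n, HasDerivAt (fun τ => v (Φ (τ, s)) τ i)
        (fderiv ℝ (fun y => v y t i) x (u x t) + deriv (fun σ => v x σ i) t) t := by
      intro i
      have hin : HasDerivAt (fun τ => (Φ (τ, s), τ)) (u x t, 1) t :=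
        (hU t s).prodMk (hasDerivAt_id t)
      have hgd : DifferentiableAt ℝ (fun q : (Fin n → ℝ) × ℝ => v q.1 q.2 i) (x, t) :=
        (contDiff_pi.1 hv i).differentiable hTop _
      have hcomp := hgd.hasFDerivAt.comp_hasDerivAt (f := fun τ => (Φ (τ, s), τ)) t hin
      have hsplit := KN.fderiv_pair_split hgd (u x t) 1
      rw [hsplit, one_smul] at hcomp
      exact hcomp
    -- symmetry of second derivatives
    have hswap : ∀ i : Fin n,
        fderiv ℝ (fun p => fderiv ℝ (fun q => Φ q i) p (0, 1)) (t, s) (1, 0)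
        = fderiv ℝ (fun p => fderiv ℝ (fun q => Φ q i) p (1, 0)) (t, s) (0, 1) := by
      intro i
      have hsd : DifferentiableAt ℝ (fderiv ℝ (fun q => Φ q i)) (t, s) :=
        ((hΦi i).fderiv_right (m := (⊤ : ℕ∞)) (by exact_mod_cast le_top)).differentiable hTop _
      have e : ∀ (c q : ℝ × ℝ),
          fderiv ℝ (fun p => fderiv ℝ (fun q' => Φ q' i) p c) (t, s) q
          = fderiv ℝ (fderiv ℝ (fun q' => Φ q' i)) (t, s) q c := by
        intro c q
        have h1 : HasFDerivAt (fun p => fderiv ℝ (fun q' => Φ q' i) p c)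
            ((ContinuousLinearMap.apply ℝ ℝ c).comp
              (fderiv ℝ (fderiv ℝ (fun q' => Φ q' i)) (t, s))) (t, s) :=
          (ContinuousLinearMap.apply ℝ ℝ c).hasFDerivAt.comp _ hsd.hasFDerivAt
        rw [h1.fderiv]
        rfl
      rw [e, e]
      exact ((hΦi i).contDiffAt.isSymmSndFDerivAt (by rw [minSmoothness_of_isRCLikeNormedField]; exact WithTop.coe_le_coe.2 le_top)) _ _
    -- derivative of the W-factor
    have hB_i : ∀ i : Fin n, HasDerivAt (fun τ => W (τ, s) i)
        (fderiv ℝ (fun y => u y t i) x Wv) t := by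
      intro i
      have h0 : (fun τ => W (τ, s) i) = fun τ => fderiv ℝ (fun q => Φ q i) (τ, s) (0, 1) :=
        funext fun τ => hWi i (τ, s)
      rw [h0]
      have hfd : DifferentiableAt ℝ (fun p => fderiv ℝ (fun q => Φ q i) p (0, 1)) (t, s) :=
        (((hΦi i).fderiv_right (m := (⊤ : ℕ∞)) (by exact_mod_cast le_top)).clm_apply
          contDiff_const).differentiable hTop _
      have h1 : HasDerivAt (fun τ => fderiv ℝ (fun q => Φ q i) (τ, s) (0, 1))
          (fderiv ℝ (fun p => fderiv ℝ (fun q => Φ q i) p (0, 1)) (t, s) (1, 0)) t :=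
        KN.hasDerivAt_fst hfd
      have h2 : fderiv ℝ (fun p => fderiv ℝ (fun q => Φ q i) p (0, 1)) (t, s) (1, 0)
          = fderiv ℝ (fun y => u y t i) x Wv := by
        rw [hswap i]
        have h3 : (fun p : ℝ × ℝ => fderiv ℝ (fun q => Φ q i) p (1, 0))
            = fun p => u (Φ p) p.1 i := funext fun p => hUi i p
        rw [h3]
        have hUc : DifferentiableAt ℝ (fun p : ℝ × ℝ => u (Φ p) p.1 i) (t, s) :=
          ((contDiff_pi.1 hu i).comp (hΦ.prodMk contDiff_fst)).differentiable hTop _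
        have h4 : HasDerivAt (fun r => u (Φ (t, r)) t i)
            (fderiv ℝ (fun p : ℝ × ℝ => u (Φ p) p.1 i) (t, s) (0, 1)) s :=
          KN.hasDerivAt_snd hUc
        have hout : DifferentiableAt ℝ (fun y => u y t i) x :=
          ((contDiff_pi.1 hu i).comp (contDiff_id.prodMk contDiff_const)).differentiable hTop _
        have h5 : HasDerivAt (fun r => u (Φ (t, r)) t i)
            (fderiv ℝ (fun y => u y t i) x Wv) s :=
          by have := hout.hasFDerivAt.comp_hasDerivAt s (hWderiv t s); exact this
        exact h4.unique h5
      rw [h2] at h1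
      exact h1
    -- derivative of the integrand in τ
    have hFt : HasDerivAt (fun τ => F (τ, s))
        (∑ i, ((fderiv ℝ (fun y => v y t i) x (u x t) + deriv (fun σ => v x σ i) t) * Wv i
          + v x t i * fderiv ℝ (fun y => u y t i) x Wv)) t := by
      refine HasDerivAt.fun_sum fun i _ => ?_
      exact (hA_i i).mul (hB_i i)
    have hD : fderiv ℝ F (t, s) (1, 0)
        = ∑ i, ((fderiv ℝ (fun y => v y t i) x (u x t) + deriv (fun σ => v x σ i) t) * Wv i
          + v x t i * fderiv ℝ (fun y => u y t i) x Wv) := by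
      have h1 : HasDerivAt (fun τ => F (τ, s)) (fderiv ℝ F (t, s) (1, 0)) t :=
        KN.hasDerivAt_fst (hF.differentiable hTop _)
      exact h1.unique hFt
    rw [hD]
    -- motion equation
    have hEP : ∀ i : Fin n,
        fderiv ℝ (fun y => v y t i) x (u x t) + deriv (fun σ => v x σ i) t
        = grad h x t i + T x t * grad ent x t i
          - ∑ j, v x t j * fderiv ℝ (fun y => u y t j) x (Pi.single i 1) := by
      intro i
      have hm := hmotion x t i
      simp only [EPop] at hm
      linarith [hm]
    have hb : ∀ i : Fin n, fderiv ℝ (fun y => u y t i) x Wv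
        = ∑ j, Wv j * fderiv ℝ (fun y => u y t i) x (Pi.single j 1) := by
      intro i
      rw [KN.fderiv_pi_eq_sum]
      simp [smul_eq_mul]
    have hgradh : deriv (fun r => h (Φ (t, r)) t) s = ∑ i, grad h x t i * Wv i := by
      have hout : DifferentiableAt ℝ (fun y => h y t) x :=
        (hh.comp (contDiff_id.prodMk contDiff_const)).differentiable hTop _
      have h1 : HasDerivAt (fun r => h (Φ (t, r)) t) (fderiv ℝ (fun y => h y t) x Wv) s :=
        by have := hout.hasFDerivAt.comp_hasDerivAt s (hWderiv t s); exact this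
      rw [h1.deriv, KN.fderiv_pi_eq_sum]
      simp only [smul_eq_mul, grad]
      exact Finset.sum_congr rfl fun i _ => mul_comm _ _
    rw [hgradh]
    simp only [hEP, hb]
    have hcancel : ∑ i, v x t i * ∑ j, Wv j * fderiv ℝ (fun y => u y t i) x (Pi.single j 1)
        = ∑ i, (∑ j, v x t j * fderiv ℝ (fun y => u y t j) x (Pi.single i 1)) * Wv i := by
      simp only [Finset.mul_sum, Finset.sum_mul]
      rw [Finset.sum_comm]
      exact Finset.sum_congr rfl fun i _ => Finset.sum_congr rfl fun j _ => by ring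
    rw [Finset.sum_add_distrib, hcancel]
    simp only [sub_mul, add_mul, Finset.sum_sub_distrib, Finset.sum_add_distrib]
    ring
  -- value of the derivative integral
  have hval : ∀ t, (∫ s in (0:ℝ)..1, fderiv ℝ F (t, s) (1, 0))
      = ∫ s in (0:ℝ)..1,
          ∑ i, T (φ t (γ₀ s)) t * grad ent (φ t (γ₀ s)) t i
            * deriv (fun r => φ t (γ₀ r) i) s := by
    intro t
    -- continuity facts
    have hc1 : Continuous fun s : ℝ => Φ (t, s) :=
      hΦ.continuous.comp (continuous_const.prodMk continuous_id)
    have hHc : ContDiff ℝ (⊤ : ℕ∞) (fun r : ℝ => h (Φ (t, r)) t) :=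
      hh.comp ((hΦ.comp (contDiff_const.prodMk contDiff_id)).prodMk contDiff_const)
    have hDHc : Continuous (deriv (fun r : ℝ => h (Φ (t, r)) t)) :=
      hHc.continuous_deriv (by exact_mod_cast le_top)
    have hSc : Continuous fun s : ℝ =>
        ∑ i, T (Φ (t, s)) t * grad ent (Φ (t, s)) t i * W (t, s) i := by
      refine continuous_finset_sum _ fun i _ => ?_
      have hTc : Continuous fun s : ℝ => T (Φ (t, s)) t :=
        hT.continuous.comp (hc1.prodMk continuous_const)
      have hGc : Continuous fun s : ℝ => grad ent (Φ (t, s)) t i := by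
        show Continuous fun s : ℝ =>
          fderiv ℝ (fun y => ent y t) (Φ (t, s)) (Pi.single i 1)
        exact (((hent.comp (contDiff_id.prodMk contDiff_const)).continuous_fderiv
          (by simp)).comp hc1).clm_apply continuous_const
      have hWc : Continuous fun s : ℝ => W (t, s) i :=
        ((contDiff_pi.1 hWs i).continuous).comp (continuous_const.prodMk continuous_id)
      exact (hTc.mul hGc).mul hWc
    rw [intervalIntegral.integral_congr (g := fun s =>
        deriv (fun r => h (Φ (t, r)) t) s
          + ∑ i, T (Φ (t, s)) t * grad ent (Φ (t, s)) t i * W (t, s) i)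
      (fun s _ => hkey t s)]
    rw [intervalIntegral.integral_add (hDHc.intervalIntegrable 0 1)
      (hSc.intervalIntegrable 0 1)]
    rw [intervalIntegral.integral_deriv_eq_sub
      (fun r _ => (hHc.differentiable hTop).differentiableAt)
      (hDHc.intervalIntegrable 0 1)]
    have hΦloop : Φ (t, 1) = Φ (t, 0) := by
      show φ t (γ₀ 1) = φ t (γ₀ 0)
      rw [hloop]
    rw [hΦloop, sub_self, zero_add]
    refine intervalIntegral.integral_congr fun s _ => ?_
    exact Finset.sum_congr rfl fun i _ => by rw [hWcomp t s i]
  have hmain : ∀ t,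
      HasDerivAt
        (fun τ => ∫ s in (0:ℝ)..1,
          ∑ i, v (φ τ (γ₀ s)) τ i * deriv (fun r => φ τ (γ₀ r) i) s)
        (∫ s in (0:ℝ)..1,
          ∑ i, T (φ t (γ₀ s)) t * grad ent (φ t (γ₀ s)) t i
            * deriv (fun r => φ t (γ₀ r) i) s)
        t := by
    intro t
    have h1 := KN.hasDerivAt_integral hF t
    rw [hval t] at h1
    have h2 : (fun τ => ∫ s in (0:ℝ)..1,
          ∑ i, v (φ τ (γ₀ s)) τ i * deriv (fun r => φ τ (γ₀ r) i) s)
        = fun τ => ∫ s in (0:ℝ)..1, F (τ, s) := funext hIeq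
    rw [h2]
    exact h1
  refine ⟨hmain, ?_⟩
  intro hz t₁ t₂
  have hconst : ∀ t, HasDerivAt
      (fun τ => ∫ s in (0:ℝ)..1,
        ∑ i, v (φ τ (γ₀ s)) τ i * deriv (fun r => φ τ (γ₀ r) i) s) 0 t := by
    intro t
    have := hmain t
    simpa [hz] using this
  exact is_const_of_deriv_eq_zero
    (fun t => (hconst t).differentiableAt) (fun t => (hconst t).deriv) t₁ t₂
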